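/- Let β, γ, B, α, δ ∈ ℝ with B > δ > 0, let b > 0, let Π : [0,b) → ℝ be a Poincaré half-map datum, assume X^sl(u) > 0 for all u ∈ [Π(x), x] and all x ∈ [0,b), and define Ĩ(x) = ∫_{Π(x)}^{x} u/X^sl(u) du. (i) If either (β ≠ 0 and (α, γ) ≠ (0,0)) or (β = 0 and α + γ(B−δ) ≠ 0), then Ĩ has at most one zero in (0,b), and every zero x₀ ∈ (0,b) of Ĩ satisfies Ĩ'(x₀) ≠ 0 (i.e., Ĩ has at most one zero counting multiplicity in (0,b)). (ii) If instead (α, γ) = (0,0), or β = 0 and α + γ(B−δ) = 0, then Ĩ(x) = 0 for all x ∈ [0,b). -/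

import Mathlib

/-- `V(x) = βx² − γx + 1`. -/
def Vq (β γ x : ℝ) : ℝ := β * x ^ 2 - γ * x + 1

/-- The sliding vector field `X^sl(x) = (B − δ + αx)/(1 + δ)`. -/
noncomputable def Xsl (B α δ x : ℝ) : ℝ := (B - δ + α * x) / (1 + δ)

/-- The slow divergence integral (up to a positive constant)
`Ĩ(x) = ∫_{P x}^{x} u / X^sl(u) du`. -/
noncomputable def Itil (B α δ : ℝ) (P : ℝ → ℝ) (x : ℝ) : ℝ :=
  ∫ u in (P x)..x, u / Xsl B α δ u

open Set MeasureTheory Filter Topology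

section helpers

private lemma icc_extend {U : Set ℝ} (hU : IsOpen U) {a c : ℝ} (hac : a ≤ c)
    (h : Set.Icc a c ⊆ U) : ∃ a' c', a' < a ∧ c < c' ∧ Set.Icc a' c' ⊆ U := by
  obtain ⟨εa, hεa, hballa⟩ := Metric.isOpen_iff.mp hU a (h ⟨le_refl a, hac⟩)
  obtain ⟨εc, hεc, hballc⟩ := Metric.isOpen_iff.mp hU c (h ⟨hac, le_refl c⟩)
  refine ⟨a - εa/2, c + εc/2, by linarith, by linarith, fun u hu => ?_⟩
  rcases lt_or_ge u a with h1 | h1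
  · apply hballa
    rw [Metric.mem_ball, Real.dist_eq, abs_lt]
    exact ⟨by linarith [hu.1], by linarith⟩
  rcases le_or_gt u c with h2 | h2
  · exact h ⟨h1, h2⟩
  · apply hballc
    rw [Metric.mem_ball, Real.dist_eq, abs_lt]
    exact ⟨by linarith, by linarith [hu.2]⟩

private lemma primitive_hasDerivAt {f : ℝ → ℝ} {a' c' q w : ℝ}
    (hf : ContinuousOn f (Set.Ioo a' c')) (hq : q ∈ Set.Ioo a' c') (hw : w ∈ Set.Ioo a' c') :
    HasDerivAt (fun t => ∫ u in q..t, f u) (f w) w := by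
  apply intervalIntegral.integral_hasDerivAt_right
  · exact (hf.mono ((Set.ordConnected_Ioo).uIcc_subset hq hw)).intervalIntegrable
  · exact hf.stronglyMeasurableAtFilter isOpen_Ioo w hw
  · exact hf.continuousAt (isOpen_Ioo.mem_nhds hw)

private lemma slope_neg_left {G : ℝ → ℝ} {z g : ℝ} (hd : HasDerivAt G g z) (hg : 0 < g)
    (hz : G z = 0) : ∀ᶠ x in 𝓝[<] z, G x < 0 := by
  have h1 : Tendsto (slope G z) (𝓝[≠] z) (𝓝 g) := hasDerivAt_iff_tendsto_slope.mp hd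
  have h2 : ∀ᶠ x in 𝓝[≠] z, 0 < slope G z x := h1.eventually (eventually_gt_nhds hg)
  have h3 : 𝓝[<] z ≤ 𝓝[≠] z := nhdsWithin_mono z (fun x hx => ne_of_lt hx)
  filter_upwards [h2.filter_mono h3, eventually_mem_nhdsWithin] with x hsl hxz
  have hxz' : x - z < 0 := sub_neg.mpr hxz
  rw [slope_def_field, hz, sub_zero] at hsl
  rcases div_pos_iff.mp hsl with ⟨_, h⟩ | ⟨h, _⟩
  · linarith
  · exact h

private lemma slope_pos_right {G : ℝ → ℝ} {z g : ℝ} (hd : HasDerivAt G g z) (hg : 0 < g)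
    (hz : G z = 0) : ∀ᶠ x in 𝓝[>] z, 0 < G x := by
  have h1 : Tendsto (slope G z) (𝓝[≠] z) (𝓝 g) := hasDerivAt_iff_tendsto_slope.mp hd
  have h2 : ∀ᶠ x in 𝓝[≠] z, 0 < slope G z x := h1.eventually (eventually_gt_nhds hg)
  have h3 : 𝓝[>] z ≤ 𝓝[≠] z := nhdsWithin_mono z (fun x hx => ne_of_gt hx)
  filter_upwards [h2.filter_mono h3, eventually_mem_nhdsWithin] with x hsl hxz
  have hxz' : (0:ℝ) < x - z := sub_pos.mpr hxz
  rw [slope_def_field, hz, sub_zero] at hsl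
  rcases div_pos_iff.mp hsl with ⟨h, _⟩ | ⟨_, h⟩
  · exact h
  · linarith

private lemma no_down {b : ℝ} {G : ℝ → ℝ} (hGc : ContinuousOn G (Set.Ico 0 b))
    (hcross : ∀ x ∈ Set.Ioo 0 b, G x = 0 → ∃ g, 0 < g ∧ HasDerivAt G g x)
    {a c : ℝ} (ha : 0 < a) (hac : a ≤ c) (hc : c < b) (hGa : 0 < G a) (hGc0 : G c ≤ 0) :
    False := by
  have hIccsub : Set.Icc a c ⊆ Set.Ico 0 b := fun u hu =>
    ⟨le_trans ha.le hu.1, lt_of_le_of_lt hu.2 hc⟩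
  have hGcc : ContinuousOn G (Set.Icc a c) := hGc.mono hIccsub
  set S := Set.Icc a c ∩ G ⁻¹' {0} with hSdef
  have hzs : S.Nonempty := by
    obtain ⟨z, hz, hz0⟩ := intermediate_value_Icc' hac hGcc ⟨hGc0, hGa.le⟩
    exact ⟨z, hz, hz0⟩
  have hSclosed : IsClosed S :=
    hGcc.preimage_isClosed_of_isClosed isClosed_Icc isClosed_singleton
  have hSbdd : BddBelow S := ⟨a, fun u hu => hu.1.1⟩
  set z := sInf S with hzdef
  have hzS : z ∈ S := hSclosed.csInf_mem hzs hSbdd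
  have hz0 : G z = 0 := hzS.2
  have hza : a < z := by
    rcases lt_or_eq_of_le hzS.1.1 with h | h
    · exact h
    · rw [← h] at hz0; rw [hz0] at hGa; exact absurd hGa (lt_irrefl 0)
  have hpos : ∀ x ∈ Set.Ico a z, 0 < G x := by
    intro x hx
    have hxc : x ≤ c := le_trans hx.2.le hzS.1.2
    rcases lt_trichotomy (G x) 0 with h | h | h
    · obtain ⟨u, hu, hu0⟩ := intermediate_value_Icc' hx.1 (hGcc.mono
        (fun w hw => ⟨hw.1, le_trans hw.2 hxc⟩)) ⟨h.le, hGa.le⟩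
      have huS : u ∈ S := ⟨⟨hu.1, le_trans hu.2 hxc⟩, hu0⟩
      have h2 : u < z := lt_of_le_of_lt hu.2 hx.2
      linarith [csInf_le hSbdd huS]
    · have hxS : x ∈ S := ⟨⟨hx.1, hxc⟩, h⟩
      linarith [csInf_le hSbdd hxS, hx.2]
    · exact h
  obtain ⟨g, hg, hdG⟩ := hcross z ⟨lt_trans ha hza, lt_of_le_of_lt hzS.1.2 hc⟩ hz0
  have hev := slope_neg_left hdG hg hz0
  have hev2 : ∀ᶠ x in 𝓝[<] z, a < x := (eventually_gt_nhds hza).filter_mono nhdsWithin_le_nhds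
  obtain ⟨x, hx1, hx2, hx3⟩ := (hev.and (hev2.and eventually_mem_nhdsWithin)).exists
  exact absurd (hpos x ⟨hx2.le, hx3⟩) (not_lt.mpr hx1.le)

private lemma aux_main {b : ℝ} (I G d : ℝ → ℝ)
    (hI0 : I 0 = 0)
    (hIc : ∀ z ∈ Set.Ioo 0 b, ContinuousOn I (Set.Icc 0 z))
    (hGc : ContinuousOn G (Set.Ico 0 b))
    (hd : ∀ x ∈ Set.Ioo 0 b, HasDerivAt I (d x) x)
    (hdG : ∀ x ∈ Set.Ioo 0 b, ∃ ρ, 0 < ρ ∧ d x = ρ * G x)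
    (hcross : ∀ x ∈ Set.Ioo 0 b, G x = 0 → ∃ g, 0 < g ∧ HasDerivAt G g x) :
    ∀ x₀ ∈ Set.Ioo 0 b, I x₀ = 0 → d x₀ ≠ 0 ∧ ∀ x₁ ∈ Set.Ioo 0 b, I x₁ = 0 → x₁ = x₀ := by
  have lemB : ∀ z ∈ Set.Ioo 0 b, G z = 0 → ∀ x, 0 < x → x ≤ z → I x < 0 := by
    intro z hz hGz x hx hxz
    obtain ⟨g, hg, hdG'⟩ := hcross z hz hGz
    have hGneg : ∀ w ∈ Set.Ioo 0 z, G w < 0 := by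
      intro w hw
      by_contra hcon
      push_neg at hcon
      have hev := slope_neg_left hdG' hg hGz
      have hev2 : ∀ᶠ u in 𝓝[<] z, w < u := (eventually_gt_nhds hw.2).filter_mono nhdsWithin_le_nhds
      obtain ⟨u, hu1, hu2, hu3⟩ := (hev.and (hev2.and eventually_mem_nhdsWithin)).exists
      have hub : u < b := lt_trans hu3 hz.2
      rcases eq_or_lt_of_le hcon with heq | hlt
      · obtain ⟨gw, hgw, hdw⟩ := hcross w ⟨hw.1, lt_trans hw.2 hz.2⟩ heq.symm
        have hevr := slope_pos_right hdw hgw heq.symm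
        have hevr2 : ∀ᶠ v in 𝓝[>] w, v < u := (eventually_lt_nhds hu2).filter_mono nhdsWithin_le_nhds
        obtain ⟨v, hv1, hv2, hv3⟩ := (hevr.and (hevr2.and eventually_mem_nhdsWithin)).exists
        exact no_down hGc hcross (lt_trans hw.1 hv3) hv2.le hub hv1 hu1.le
      · exact no_down hGc hcross hw.1 hu2.le hub hlt hu1.le
    have hanti : StrictAntiOn I (Set.Icc 0 z) := by
      apply strictAntiOn_of_deriv_neg (convex_Icc 0 z) (hIc z hz)
      intro w hw
      rw [interior_Icc] at hw
      have hwb : w ∈ Set.Ioo 0 b := ⟨hw.1, lt_trans hw.2 hz.2⟩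
      rw [(hd w hwb).deriv]
      obtain ⟨ρ, hρ, heq⟩ := hdG w hwb
      rw [heq]
      exact mul_neg_of_pos_of_neg hρ (hGneg w hw)
    have h := hanti ⟨le_refl 0, hz.1.le⟩ ⟨hx.le, hxz⟩ hx
    rw [hI0] at h
    exact h
  have rolle : ∀ u v, u ∈ Set.Ioo 0 b → v ∈ Set.Ioo 0 b → u < v → I u = 0 → I v = 0 → False := by
    intro u v hu hv huv hIu hIv
    have hsub : Set.Icc u v ⊆ Set.Icc 0 v := fun w hw => ⟨le_trans hu.1.le hw.1, hw.2⟩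
    obtain ⟨z, hzmem, hz0⟩ := exists_hasDerivAt_eq_zero huv ((hIc v hv).mono hsub)
      (hIu.trans hIv.symm) (fun w hw => hd w ⟨lt_trans hu.1 hw.1, lt_trans hw.2 hv.2⟩)
    have hzb : z ∈ Set.Ioo 0 b := ⟨lt_trans hu.1 hzmem.1, lt_trans hzmem.2 hv.2⟩
    obtain ⟨ρ, hρ, heq⟩ := hdG z hzb
    have hGz : G z = 0 := by
      rcases mul_eq_zero.mp (heq ▸ hz0) with h | h
      · exact absurd h hρ.ne'
      · exact h
    have h := lemB z hzb hGz u hu.1 hzmem.1.le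
    rw [hIu] at h
    exact absurd h (lt_irrefl 0)
  intro x₀ hx₀ hIx₀
  constructor
  · obtain ⟨ρ, hρ, heq⟩ := hdG x₀ hx₀
    intro hd0
    have hG0 : G x₀ = 0 := by
      rcases mul_eq_zero.mp (heq ▸ hd0) with h | h
      · exact absurd h hρ.ne'
      · exact h
    have h := lemB x₀ hx₀ hG0 x₀ hx₀.1 le_rfl
    rw [hIx₀] at h
    exact absurd h (lt_irrefl 0)
  · intro x₁ hx₁ hIx₁
    by_contra hne
    rcases lt_or_gt_of_ne hne with hlt | hgt
    · exact rolle x₁ x₀ hx₁ hx₀ hlt hIx₁ hIx₀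
    · exact rolle x₀ x₁ hx₀ hx₁ hgt hIx₀ hIx₁

end helpers
private lemma deriv_pack (β γ b B α δ : ℝ) (hb : 0 < b) (hBδ : B > δ) (hδ : δ > 0) (P : ℝ → ℝ)
    (hdiff : DifferentiableOn ℝ P (Set.Ico 0 b))
    (hPneg : ∀ x ∈ Set.Ioo 0 b, P x < 0)
    (hV : ∀ x ∈ Set.Ioo 0 b, ∀ u ∈ Set.Icc (P x) x, Vq β γ u > 0)
    (hint : ∀ x ∈ Set.Ioo 0 b, ∫ u in (P x)..x, u / Vq β γ u = 0)
    (hXsl : ∀ x ∈ Set.Ico 0 b, ∀ u ∈ Set.Icc (P x) x, Xsl B α δ u > 0) :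
    ∀ x ∈ Set.Ioo 0 b,
      HasDerivAt (Itil B α δ P) (x / Xsl B α δ x - deriv P x * (P x / Xsl B α δ (P x))) x ∧
      x / Vq β γ x = deriv P x * (P x / Vq β γ (P x)) := by
  intro x hx
  have hδ1 : (0:ℝ) < 1 + δ := by linarith
  have hy : P x < 0 := hPneg x hx
  have hyx : P x ≤ x := by linarith [hx.1]
  have hXpos : ∀ u ∈ Set.Icc (P x) x, 0 < B - δ + α * u := by
    intro u hu
    have := hXsl x (Set.Ioo_subset_Ico_self hx) u hu
    rw [Xsl] at this
    rcases div_pos_iff.mp this with ⟨h1, _⟩ | ⟨_, h2⟩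
    · exact h1
    · linarith
  have hVq : Continuous (Vq β γ) := by unfold Vq; fun_prop
  have hXc : Continuous (fun u : ℝ => B - δ + α * u) := by fun_prop
  set U : Set ℝ := {u | 0 < Vq β γ u} ∩ {u | 0 < B - δ + α * u} with hUdef
  have hUopen : IsOpen U := (isOpen_lt continuous_const hVq).inter (isOpen_lt continuous_const hXc)
  have hUsub : Set.Icc (P x) x ⊆ U := fun u hu => ⟨hV x hx u hu, hXpos u hu⟩
  obtain ⟨a', c', ha', hc', hsub⟩ := icc_extend hUopen hyx hUsub
  have hIoosub : Set.Ioo a' c' ⊆ U := fun u hu => hsub ⟨hu.1.le, hu.2.le⟩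
  set fV : ℝ → ℝ := fun u => u / Vq β γ u with hfVdef
  set fX : ℝ → ℝ := fun u => u / Xsl B α δ u with hfXdef
  have hfVc : ContinuousOn fV (Set.Ioo a' c') :=
    continuousOn_id.div (hVq.continuousOn) (fun u hu => ne_of_gt (hIoosub hu).1)
  have hfXc : ContinuousOn fX (Set.Ioo a' c') := by
    apply continuousOn_id.div ((hXc.div_const (1+δ)).continuousOn)
    intro u hu
    exact ne_of_gt (div_pos (hIoosub hu).2 hδ1)
  have hxm : x ∈ Set.Ioo a' c' := ⟨lt_of_lt_of_le ha' hyx, hc'⟩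
  have hym : P x ∈ Set.Ioo a' c' := ⟨ha', lt_of_le_of_lt hyx hc'⟩
  have hPda : DifferentiableAt ℝ P x := by
    apply (hdiff x (Set.Ioo_subset_Ico_self hx)).differentiableAt
    exact mem_nhds_iff.mpr ⟨Set.Ioo 0 b, Set.Ioo_subset_Ico_self, isOpen_Ioo, hx⟩
  have hDP : HasDerivAt P (deriv P x) x := hPda.hasDerivAt
  have hev : ∀ᶠ t in 𝓝 x, t ∈ Set.Ioo 0 b ∧ t ∈ Set.Ioo a' c' ∧ P t ∈ Set.Ioo a' c' := by
    have e1 : ∀ᶠ t in 𝓝 x, t ∈ Set.Ioo 0 b := isOpen_Ioo.eventually_mem hx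
    have e2 : ∀ᶠ t in 𝓝 x, t ∈ Set.Ioo a' c' := isOpen_Ioo.eventually_mem hxm
    have e3 : ∀ᶠ t in 𝓝 x, P t ∈ Set.Ioo a' c' :=
      hPda.continuousAt.eventually_mem (isOpen_Ioo.mem_nhds hym)
    filter_upwards [e1, e2, e3] with t h1 h2 h3 using ⟨h1, h2, h3⟩
  have hsplit : ∀ (f : ℝ → ℝ), ContinuousOn f (Set.Ioo a' c') → ∀ t, t ∈ Set.Ioo a' c' →
      P t ∈ Set.Ioo a' c' →
      (∫ u in (P t)..t, f u) = (∫ u in x..t, f u) - ∫ u in x..(P t), f u := by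
    intro f hf t ht hPt
    have h1 : IntervalIntegrable f volume (P t) x :=
      (hf.mono ((Set.ordConnected_Ioo).uIcc_subset hPt hxm)).intervalIntegrable
    have h2 : IntervalIntegrable f volume x t :=
      (hf.mono ((Set.ordConnected_Ioo).uIcc_subset hxm ht)).intervalIntegrable
    rw [← intervalIntegral.integral_add_adjacent_intervals h1 h2,
      intervalIntegral.integral_symm]
    ring
  have hrepX : ∀ᶠ t in 𝓝 x, Itil B α δ P t = (∫ u in x..t, fX u) - ∫ u in x..(P t), fX u := by
    filter_upwards [hev] with t ⟨h1, h2, h3⟩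
    rw [Itil]
    exact hsplit fX hfXc t h2 h3
  have hrepV : ∀ᶠ t in 𝓝 x, ((∫ u in x..t, fV u) - ∫ u in x..(P t), fV u) = 0 := by
    filter_upwards [hev] with t ⟨h1, h2, h3⟩
    rw [← hsplit fV hfVc t h2 h3]
    exact hint t h1
  have hDX1 : HasDerivAt (fun t => ∫ u in x..t, fX u) (fX x) x :=
    primitive_hasDerivAt hfXc hxm hxm
  have hDX2 : HasDerivAt (fun t => ∫ u in x..t, fX u) (fX (P x)) (P x) :=
    primitive_hasDerivAt hfXc hxm hym
  have hDXcomp : HasDerivAt (fun t => ∫ u in x..(P t), fX u) (fX (P x) * deriv P x) x :=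
    HasDerivAt.comp x hDX2 hDP
  have hIt : HasDerivAt (Itil B α δ P) (fX x - fX (P x) * deriv P x) x :=
    (hDX1.sub hDXcomp).congr_of_eventuallyEq hrepX
  have hDV1 : HasDerivAt (fun t => ∫ u in x..t, fV u) (fV x) x :=
    primitive_hasDerivAt hfVc hxm hxm
  have hDV2 : HasDerivAt (fun t => ∫ u in x..t, fV u) (fV (P x)) (P x) :=
    primitive_hasDerivAt hfVc hxm hym
  have hDVcomp : HasDerivAt (fun t => ∫ u in x..(P t), fV u) (fV (P x) * deriv P x) x :=
    HasDerivAt.comp x hDV2 hDP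
  have hVdiff : HasDerivAt (fun t => (∫ u in x..t, fV u) - ∫ u in x..(P t), fV u)
      (fV x - fV (P x) * deriv P x) x := hDV1.sub hDVcomp
  have hzero : HasDerivAt (fun t => (∫ u in x..t, fV u) - ∫ u in x..(P t), fV u) 0 x :=
    (hasDerivAt_const x (0:ℝ)).congr_of_eventuallyEq hrepV
  have huniq : fV x - fV (P x) * deriv P x = 0 := hVdiff.unique hzero
  constructor
  · have : fX x - fX (P x) * deriv P x
        = x / Xsl B α δ x - deriv P x * (P x / Xsl B α δ (P x)) := by
      simp only [hfXdef]; ring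
    rw [← this]
    exact hIt
  · have h1 : fV x = fV (P x) * deriv P x := by linarith [huniq]
    simp only [hfVdef] at h1
    rw [h1]; ring
private lemma s_sign_up (β γ : ℝ) {x y : ℝ} (hx : 0 < x) (hy : y < 0)
    (hVpos : ∀ u ∈ Set.Icc y x, 0 < Vq β γ u)
    (hint0 : (∫ u in y..x, u / Vq β γ u) = 0)
    (hγ : 0 ≤ γ) (hs : -y ≤ x) (hstrict : 0 < γ ∨ -y < x) : False := by
  have hVc : Continuous (Vq β γ) := by unfold Vq; fun_prop
  set fV : ℝ → ℝ := fun u => u / Vq β γ u with hfV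
  have hfVc : ContinuousOn fV (Set.Icc y x) :=
    continuousOn_id.div hVc.continuousOn (fun u hu => ne_of_gt (hVpos u hu))
  set g : ℝ → ℝ := fun u => 2 * γ * u ^ 2 / (Vq β γ u * Vq β γ (-u)) with hg
  have h0y : Set.Icc 0 (-y) ⊆ Set.Icc y x := fun u hu =>
    ⟨le_trans hy.le hu.1, le_trans hu.2 hs⟩
  have hy0 : Set.Icc y 0 ⊆ Set.Icc y x := fun u hu => ⟨hu.1, le_trans hu.2 hx.le⟩
  have hyx : Set.Icc (-y) x ⊆ Set.Icc y x := fun u hu => ⟨le_trans (by linarith) hu.1, hu.2⟩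
  have hVgpos : ∀ u ∈ Set.Icc 0 (-y), 0 < Vq β γ u ∧ 0 < Vq β γ (-u) := by
    intro u hu
    refine ⟨hVpos u (h0y hu), hVpos (-u) ?_⟩
    constructor <;> [linarith [hu.2]; linarith [hu.1, hx.le]]
  have hi1 : IntervalIntegrable fV volume y 0 := by
    apply ContinuousOn.intervalIntegrable
    rw [Set.uIcc_of_le hy.le]
    exact hfVc.mono hy0
  have hi2 : IntervalIntegrable fV volume 0 (-y) := by
    apply ContinuousOn.intervalIntegrable
    rw [Set.uIcc_of_le (by linarith : (0:ℝ) ≤ -y)]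
    exact hfVc.mono h0y
  have hi3 : IntervalIntegrable fV volume (-y) x := by
    apply ContinuousOn.intervalIntegrable
    rw [Set.uIcc_of_le hs]
    exact hfVc.mono hyx
  have hcontneg : ContinuousOn (fun u => fV (-u)) (Set.Icc 0 (-y)) := by
    apply (continuous_neg.continuousOn).div (hVc.comp continuous_neg).continuousOn
    intro u hu
    exact ne_of_gt (hVgpos u hu).2
  have hi4 : IntervalIntegrable (fun u => fV (-u)) volume 0 (-y) := by
    apply ContinuousOn.intervalIntegrable
    rw [Set.uIcc_of_le (by linarith : (0:ℝ) ≤ -y)]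
    exact hcontneg
  have hgcont : ContinuousOn g (Set.Icc 0 (-y)) := by
    apply ContinuousOn.div (by fun_prop)
    · exact (hVc.continuousOn).mul (hVc.comp continuous_neg).continuousOn
    · intro u hu
      exact ne_of_gt (mul_pos (hVgpos u hu).1 (hVgpos u hu).2)
  have hi5 : IntervalIntegrable g volume 0 (-y) := by
    apply ContinuousOn.intervalIntegrable
    rw [Set.uIcc_of_le (by linarith : (0:ℝ) ≤ -y)]
    exact hgcont
  have hsplit : (∫ u in y..x, fV u)
      = ((∫ u in y..0, fV u) + ∫ u in (0:ℝ)..(-y), fV u) + ∫ u in (-y)..x, fV u := by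
    rw [intervalIntegral.integral_add_adjacent_intervals hi1 hi2,
      intervalIntegral.integral_add_adjacent_intervals (hi1.trans hi2) hi3]
  have hneg : (∫ u in y..0, fV u) = ∫ u in (0:ℝ)..(-y), fV (-u) := by
    rw [intervalIntegral.integral_comp_neg]
    norm_num
  have hcomb : (∫ u in y..0, fV u) + (∫ u in (0:ℝ)..(-y), fV u)
      = ∫ u in (0:ℝ)..(-y), (fV (-u) + fV u) := by
    rw [hneg, ← intervalIntegral.integral_add hi4 hi2]
  have heven : (∫ u in (0:ℝ)..(-y), (fV (-u) + fV u)) = ∫ u in (0:ℝ)..(-y), g u := by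
    apply intervalIntegral.integral_congr
    intro u hu
    rw [Set.uIcc_of_le (by linarith : (0:ℝ) ≤ -y)] at hu
    obtain ⟨h1, h2⟩ := hVgpos u hu
    simp only [hfV, hg]
    field_simp
    unfold Vq
    ring
  have hT1 : (0:ℝ) ≤ ∫ u in (0:ℝ)..(-y), g u := by
    apply intervalIntegral.integral_nonneg (by linarith : (0:ℝ) ≤ -y)
    intro u hu
    obtain ⟨h1, h2⟩ := hVgpos u hu
    apply div_nonneg _ (le_of_lt (mul_pos h1 h2))
    positivity
  have hT2 : (0:ℝ) ≤ ∫ u in (-y)..x, fV u := by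
    apply intervalIntegral.integral_nonneg hs
    intro u hu
    exact div_nonneg (by linarith [hu.1]) (le_of_lt (hVpos u (hyx hu)))
  have hzero : ((∫ u in (0:ℝ)..(-y), g u) + ∫ u in (-y)..x, fV u) = 0 := by
    rw [← heven, ← hcomb, ← hsplit]
    exact hint0
  rcases hstrict with hγpos | hxs
  · have : (0:ℝ) < ∫ u in (0:ℝ)..(-y), g u := by
      apply intervalIntegral.intervalIntegral_pos_of_pos_on hi5
      · intro u hu
        obtain ⟨h1, h2⟩ := hVgpos u ⟨hu.1.le, hu.2.le⟩
        apply div_pos _ (mul_pos h1 h2)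
        have hune : u ≠ 0 := ne_of_gt hu.1
        positivity
      · linarith
    linarith
  · have : (0:ℝ) < ∫ u in (-y)..x, fV u := by
      apply intervalIntegral.intervalIntegral_pos_of_pos_on hi3
      · intro u hu
        exact div_pos (by linarith [hu.1] : (0:ℝ) < u) (hVpos u (hyx ⟨hu.1.le, hu.2.le⟩))
      · exact hxs
    linarith

private lemma s_sign (β γ : ℝ) {x y : ℝ} (hx : 0 < x) (hy : y < 0)
    (hVpos : ∀ u ∈ Set.Icc y x, 0 < Vq β γ u)
    (hint0 : (∫ u in y..x, u / Vq β γ u) = 0) :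
    (0 < γ → x + y < 0) ∧ (γ < 0 → 0 < x + y) ∧ (γ = 0 → x + y = 0) := by
  -- reflected data
  have hVref : ∀ u ∈ Set.Icc (-x) (-y), 0 < Vq β (-γ) u := by
    intro u hu
    have : Vq β (-γ) u = Vq β γ (-u) := by unfold Vq; ring
    rw [this]
    exact hVpos (-u) ⟨by linarith [hu.2], by linarith [hu.1]⟩
  have hintref : (∫ u in (-x)..(-y), u / Vq β (-γ) u) = 0 := by
    have hcong : (∫ u in (-x)..(-y), u / Vq β (-γ) u)
        = ∫ u in (-x)..(-y), (fun w => -w / Vq β γ w) (-u) := by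
      apply intervalIntegral.integral_congr
      intro u _
      have : Vq β (-γ) u = Vq β γ (-u) := by unfold Vq; ring
      simp only [this, neg_neg]
    rw [hcong, intervalIntegral.integral_comp_neg (fun w => -w / Vq β γ w)]
    norm_num
    have : (∫ u in y..x, -(u / Vq β γ u)) = -∫ u in y..x, u / Vq β γ u :=
      intervalIntegral.integral_neg
    simp only [neg_div] at this ⊢
    rw [this, hint0, neg_zero]
  have Hdn : γ ≤ 0 → y ≤ -x → (γ < 0 ∨ y < -x) → False := by
    intro h1 h2 h3
    apply s_sign_up β (-γ) (by linarith : (0:ℝ) < -y) (by linarith : -x < 0) hVref hintref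
      (by linarith) (by linarith)
    rcases h3 with h | h
    · exact Or.inl (by linarith)
    · exact Or.inr (by linarith)
  have Hup : 0 ≤ γ → -y ≤ x → (0 < γ ∨ -y < x) → False :=
    fun h1 h2 h3 => s_sign_up β γ hx hy hVpos hint0 h1 h2 h3
  refine ⟨?_, ?_, ?_⟩
  · intro hγ
    by_contra hcon
    push_neg at hcon
    exact Hup hγ.le (by linarith) (Or.inl hγ)
  · intro hγ
    by_contra hcon
    push_neg at hcon
    exact Hdn hγ.le (by linarith) (Or.inl hγ)
  · intro hγ
    by_contra hcon
    rcases lt_or_gt_of_ne hcon with h | h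
    · exact Hdn hγ.le (by linarith) (Or.inr (by linarith))
    · exact Hup hγ.ge (by linarith) (Or.inr (by linarith))

private lemma itil_cont (B α δ : ℝ) (P : ℝ → ℝ) {z : ℝ} (hz0 : 0 < z)
    (hXpos : ∀ u ∈ Set.Icc (P z) z, 0 < Xsl B α δ u)
    (hPc : ContinuousOn P (Set.Icc 0 z))
    (hP0 : P 0 = 0)
    (hmaps : ∀ t ∈ Set.Icc 0 z, P z ≤ P t ∧ P t ≤ 0) :
    ContinuousOn (Itil B α δ P) (Set.Icc 0 z) := by
  have hPz : P z ≤ 0 := (hmaps z ⟨hz0.le, le_rfl⟩).2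
  have hPzz : P z ≤ z := le_trans hPz hz0.le
  set fX : ℝ → ℝ := fun u => u / Xsl B α δ u with hfXdef
  have hXcont : Continuous (Xsl B α δ) := by unfold Xsl; fun_prop
  have hfXc : ContinuousOn fX (Set.Icc (P z) z) :=
    continuousOn_id.div hXcont.continuousOn (fun u hu => ne_of_gt (hXpos u hu))
  have hInt : IntegrableOn fX (Set.uIcc (P z) z) volume := by
    rw [Set.uIcc_of_le hPzz]
    exact hfXc.integrableOn_Icc
  have hprim : ContinuousOn (fun t => ∫ u in (P z)..t, fX u) (Set.Icc (P z) z) := by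
    have h := intervalIntegral.continuousOn_primitive_interval hInt
    rwa [Set.uIcc_of_le hPzz] at h
  have hmem1 : ∀ t ∈ Set.Icc 0 z, t ∈ Set.Icc (P z) z := fun t ht =>
    ⟨le_trans hPz ht.1, ht.2⟩
  have hmem2 : ∀ t ∈ Set.Icc 0 z, P t ∈ Set.Icc (P z) z := fun t ht =>
    ⟨(hmaps t ht).1, le_trans (hmaps t ht).2 hz0.le⟩
  have hrep : ∀ t ∈ Set.Icc 0 z,
      ((fun t => ∫ u in (P z)..t, fX u) t - (fun t => ∫ u in (P z)..(P t), fX u) t)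
        = Itil B α δ P t := by
    intro t ht
    have h1 : IntervalIntegrable fX volume (P z) (P t) :=
      (hfXc.mono ((Set.ordConnected_Icc).uIcc_subset ⟨le_rfl, hPzz⟩ (hmem2 t ht))).intervalIntegrable
    have h2 : IntervalIntegrable fX volume (P t) t :=
      (hfXc.mono ((Set.ordConnected_Icc).uIcc_subset (hmem2 t ht) (hmem1 t ht))).intervalIntegrable
    simp only [Itil]
    rw [← intervalIntegral.integral_add_adjacent_intervals h1 h2]
    ring
  have c1 : ContinuousOn (fun t => ∫ u in (P z)..t, fX u) (Set.Icc 0 z) :=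
    hprim.mono (fun t ht => hmem1 t ht)
  have c2 : ContinuousOn (fun t => ∫ u in (P z)..(P t), fX u) (Set.Icc 0 z) :=
    hprim.comp hPc (fun t ht => hmem2 t ht)
  exact ContinuousOn.congr (c1.sub c2) (fun t ht => (hrep t ht).symm)


set_option maxHeartbeats 1000000 in
theorem slow_divergence_integral_main (β γ b B α δ : ℝ)
    (hb : 0 < b) (hBδ : B > δ) (hδ : δ > 0) (P : ℝ → ℝ)
    (hdiff : DifferentiableOn ℝ P (Set.Ico 0 b))
    (hP0 : P 0 = 0)
    (hPneg : ∀ x ∈ Set.Ioo 0 b, P x < 0)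
    (hV : ∀ x ∈ Set.Ioo 0 b, ∀ u ∈ Set.Icc (P x) x, Vq β γ u > 0)
    (hint : ∀ x ∈ Set.Ioo 0 b, ∫ u in (P x)..x, u / Vq β γ u = 0)
    (hXsl : ∀ x ∈ Set.Ico 0 b, ∀ u ∈ Set.Icc (P x) x, Xsl B α δ u > 0) :
    (((β ≠ 0 ∧ (α, γ) ≠ ((0 : ℝ), (0 : ℝ))) ∨ (β = 0 ∧ α + γ * (B - δ) ≠ 0)) →
      ∀ x₀ ∈ Set.Ioo 0 b, Itil B α δ P x₀ = 0 →
        deriv (Itil B α δ P) x₀ ≠ 0 ∧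
        ∀ x₁ ∈ Set.Ioo 0 b, Itil B α δ P x₁ = 0 → x₁ = x₀) ∧
    (((α, γ) = ((0 : ℝ), (0 : ℝ)) ∨ (β = 0 ∧ α + γ * (B - δ) = 0)) →
      ∀ x ∈ Set.Ico 0 b, Itil B α δ P x = 0) := by
  have hm : (0:ℝ) < B - δ := by linarith
  have hδ1 : (0:ℝ) < 1 + δ := by linarith
  have hpack := deriv_pack β γ b B α δ hb hBδ hδ P hdiff hPneg hV hint hXsl
  have hXnum : ∀ x ∈ Set.Ico 0 b, ∀ u ∈ Set.Icc (P x) x, 0 < B - δ + α * u := by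
    intro x hx u hu
    have h := hXsl x hx u hu
    rw [Xsl] at h
    rcases div_pos_iff.mp h with ⟨h1, _⟩ | ⟨_, h2⟩
    · exact h1
    · linarith
  -- endpoint facts
  have hfacts : ∀ x ∈ Set.Ioo 0 b, P x < 0 ∧ 0 < Vq β γ x ∧ 0 < Vq β γ (P x) ∧
      0 < B - δ + α * x ∧ 0 < B - δ + α * (P x) := by
    intro x hx
    have hy : P x < 0 := hPneg x hx
    have hyx : P x ≤ x := by linarith [hx.1]
    refine ⟨hy, hV x hx x ⟨hyx, le_rfl⟩, hV x hx (P x) ⟨le_rfl, hyx⟩,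
      hXnum x (Set.Ioo_subset_Ico_self hx) x ⟨hyx, le_rfl⟩,
      hXnum x (Set.Ioo_subset_Ico_self hx) (P x) ⟨le_rfl, hyx⟩⟩
  -- derivative of P is negative
  have hPd : ∀ x ∈ Set.Ioo 0 b, deriv P x < 0 := by
    intro x hx
    obtain ⟨hy, hVx, hVy, hXx, hXy⟩ := hfacts x hx
    have hid := (hpack x hx).2
    by_contra hcon
    push_neg at hcon
    have h1 : 0 < x / Vq β γ x := div_pos hx.1 hVx
    have h2 : P x / Vq β γ (P x) < 0 := div_neg_of_neg_of_pos hy hVy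
    nlinarith [mul_nonpos_of_nonneg_of_nonpos hcon h2.le]
  -- P is antitone on each [0,z]
  have hanti : ∀ z ∈ Set.Ioo 0 b, ∀ t ∈ Set.Icc 0 z, P z ≤ P t ∧ P t ≤ 0 := by
    intro z hz
    have hsub : Set.Icc 0 z ⊆ Set.Ico 0 b := fun u hu => ⟨hu.1, lt_of_le_of_lt hu.2 hz.2⟩
    have hantiz : StrictAntiOn P (Set.Icc 0 z) := by
      apply strictAntiOn_of_deriv_neg (convex_Icc 0 z) (hdiff.continuousOn.mono hsub)
      intro w hw
      rw [interior_Icc] at hw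
      exact hPd w ⟨hw.1, lt_trans hw.2 hz.2⟩
    intro t ht
    constructor
    · rcases eq_or_lt_of_le ht.2 with h | h
      · rw [h]
      · exact (hantiz ht ⟨hz.1.le, le_rfl⟩ h).le
    · rcases eq_or_lt_of_le ht.1 with h | h
      · rw [← h, hP0]
      · have hh := hantiz ⟨le_rfl, hz.1.le⟩ ht h
        rw [hP0] at hh
        exact hh.le
  have hIcont : ∀ z ∈ Set.Ioo 0 b, ContinuousOn (Itil B α δ P) (Set.Icc 0 z) := by
    intro z hz
    apply itil_cont B α δ P hz.1
    · exact fun u hu => hXsl z ⟨hz.1.le, hz.2⟩ u hu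
    · exact hdiff.continuousOn.mono (fun u hu => ⟨hu.1, lt_of_le_of_lt hu.2 hz.2⟩)
    · exact hP0
    · exact hanti z hz
  have hI00 : Itil B α δ P 0 = 0 := by
    rw [Itil, hP0, intervalIntegral.integral_same]
  -- the G function
  set Gf : ℝ → ℝ :=
    fun x => β * ((B - δ) * (x + P x) + α * (x * P x)) - ((B - δ) * γ + α) with hGfdef
  have hGc : ContinuousOn Gf (Set.Ico 0 b) := by
    apply ContinuousOn.sub _ continuousOn_const
    apply continuousOn_const.mul
    exact (continuousOn_const.mul (continuousOn_id.add hdiff.continuousOn)).add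
      (continuousOn_const.mul (continuousOn_id.mul hdiff.continuousOn))
  set df : ℝ → ℝ := fun x =>
    ((1+δ) * x * (x - P x) / ((B - δ + α*x) * (B - δ + α*(P x)) * Vq β γ x)) * Gf x with hdfdef
  -- derivative of Itil equals df
  have hd : ∀ x ∈ Set.Ioo 0 b, HasDerivAt (Itil B α δ P) (df x) x := by
    intro x hx
    obtain ⟨hy, hVx, hVy, hXx, hXy⟩ := hfacts x hx
    have h := (hpack x hx).1
    have hid := (hpack x hx).2
    have hval : x / Xsl B α δ x - deriv P x * (P x / Xsl B α δ (P x)) = df x := by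
      have hp'' : x * Vq β γ (P x) = deriv P x * (P x * Vq β γ x) := by
        field_simp at hid
        linear_combination hid
      have hMx : (B - δ + α*x) ≠ 0 := ne_of_gt hXx
      have hMy : (B - δ + α*(P x)) ≠ 0 := ne_of_gt hXy
      have hVx' : Vq β γ x ≠ 0 := ne_of_gt hVx
      have harr : ∀ w : ℝ, w / Xsl B α δ w = w * (1+δ) / (B - δ + α*w) := by
        intro w
        rw [Xsl, div_div_eq_mul_div]
      rw [harr x, harr (P x)]
      simp only [hdfdef, hGfdef]
      rw [mul_div_assoc', div_sub_div _ _ hMx hMy, div_mul_eq_mul_div,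
        div_eq_div_iff (mul_ne_zero hMx hMy)
          (mul_ne_zero (mul_ne_zero hMx hMy) hVx')]
      simp only [Vq] at hp'' ⊢
      linear_combination ((1+δ)*(B-δ+α*x)^2*(B-δ+α*(P x))) * hp''
    rwa [hval] at h
  have hdG : ∀ x ∈ Set.Ioo 0 b, ∃ ρ, 0 < ρ ∧ df x = ρ * Gf x := by
    intro x hx
    obtain ⟨hy, hVx, hVy, hXx, hXy⟩ := hfacts x hx
    refine ⟨(1+δ) * x * (x - P x) / ((B - δ + α*x) * (B - δ + α*(P x)) * Vq β γ x), ?_, rfl⟩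
    apply div_pos
    · have h1 : 0 < x - P x := by linarith [hx.1]
      exact mul_pos (mul_pos hδ1 hx.1) h1
    · exact mul_pos (mul_pos hXx hXy) hVx
  -- the key product-negativity fact
  have hβp : ∀ x ∈ Set.Ioo 0 b, β * (x * P x) - 1 < 0 := by
    intro x hx
    obtain ⟨hy, hVx, hVy, hXx, hXy⟩ := hfacts x hx
    have hkey : (x - P x) * (1 - β * (x * P x))
        = (-(P x)) * Vq β γ x + x * Vq β γ (P x) := by
      unfold Vq; ring
    nlinarith [mul_pos (neg_pos.mpr hy) hVx, mul_pos hx.1 hVy, hx.1]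
  -- core crossing estimate
  have hcross_core : ((β ≠ 0 ∧ (α, γ) ≠ ((0:ℝ), (0:ℝ))) ∨ (β = 0 ∧ α + γ * (B - δ) ≠ 0)) →
      ∀ x ∈ Set.Ioo 0 b, Gf x = 0 →
      HasDerivAt Gf (β * ((B - δ) * (1 + deriv P x) + α * (P x + x * deriv P x))) x ∧
      0 < ((β*(B-δ)^2 + γ*(B-δ)*α + α^2) * γ) *
        (β * ((B - δ) * (1 + deriv P x) + α * (P x + x * deriv P x))) := by
    intro hyp x hx hG0
    obtain ⟨hy, hVx, hVy, hXx, hXy⟩ := hfacts x hx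
    have hPda : DifferentiableAt ℝ P x := by
      apply (hdiff x (Set.Ioo_subset_Ico_self hx)).differentiableAt
      exact mem_nhds_iff.mpr ⟨Set.Ioo 0 b, Set.Ioo_subset_Ico_self, isOpen_Ioo, hx⟩
    have hDP : HasDerivAt P (deriv P x) x := hPda.hasDerivAt
    have hder : HasDerivAt Gf
        (β * ((B - δ) * (1 + deriv P x) + α * (P x + x * deriv P x))) x := by
      have h1 : HasDerivAt (fun t => t + P t) (1 + deriv P x) x := (hasDerivAt_id x).add hDP
      have h2 : HasDerivAt (fun t => t * P t) (1 * P x + x * deriv P x) x :=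
        (hasDerivAt_id x).mul hDP
      have h3 := ((h1.const_mul (B - δ)).add (h2.const_mul α)).const_mul β
      have h4 := h3.sub_const ((B - δ) * γ + α)
      simpa only [one_mul, hGfdef, Pi.add_apply] using h4
    refine ⟨hder, ?_⟩
    rcases hyp with ⟨hβ, hαγ⟩ | ⟨hβ0, hne⟩
    · -- main case β ≠ 0
      have hαγ' : ¬(α = 0 ∧ γ = 0) := by
        intro ⟨h1, h2⟩
        exact hαγ (by rw [h1, h2])
      have hss := s_sign β γ hx.1 hy (fun u hu => hV x hx u hu) (hint x hx)
      have hγ : γ ≠ 0 := by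
        intro hγ0
        have hs0 : x + P x = 0 := hss.2.2 hγ0
        have hGval : Gf x = α * (β * (x * P x) - 1) := by
          simp only [hGfdef, hγ0]
          linear_combination β * (B - δ) * hs0
        rw [hG0] at hGval
        have hα0 : α = 0 := by
          rcases mul_eq_zero.mp hGval.symm with h | h
          · exact h
          · exact absurd h (ne_of_lt (hβp x hx))
        exact hαγ' ⟨hα0, hγ0⟩
      have hγs : γ * (x + P x) < 0 := by
        rcases lt_trichotomy γ 0 with h | h | h
        · exact mul_neg_of_neg_of_pos h (hss.2.1 h)
        · exact absurd h hγ
        · exact mul_neg_of_pos_of_neg h (hss.1 h)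
      set Λ : ℝ := β*(B-δ)^2 + γ*(B-δ)*α + α^2 with hΛdef
      have hΛ : Λ ≠ 0 := by
        have hDid : β * ((B - δ + α*x) * (B - δ + α*(P x))) - α * Gf x = Λ := by
          simp only [hGfdef, hΛdef]; ring
        rw [hG0, mul_zero, sub_zero] at hDid
        rw [← hDid]
        exact mul_ne_zero hβ (ne_of_gt (mul_pos hXx hXy))
      have hid := (hpack x hx).2
      have hp'' : x * Vq β γ (P x) = deriv P x * (P x * Vq β γ x) := by
        field_simp at hid
        linarith
      set gv : ℝ := β * ((B - δ) * (1 + deriv P x) + α * (P x + x * deriv P x)) with hgvdef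
      have hstep1 : gv * (P x * Vq β γ x)
          = β * ((P x)*(B - δ + α*(P x))*Vq β γ x + x*(B - δ + α*x)*Vq β γ (P x)) := by
        simp only [hgvdef]
        linear_combination (-(β * (B - δ + α*x))) * hp''
      have hKid : (B-δ) * (gv * (P x * Vq β γ x))
          = -(Λ * (β*(x*P x) - 1) * (x + P x)) := by
        rw [hstep1]
        simp only [hΛdef, Vq]
        have hGexp : β * ((B - δ) * (x + P x) + α * (x * P x)) - ((B - δ) * γ + α) = 0 := by
          simpa only [hGfdef] using hG0
        linear_combination (((2*(B-δ)*β*(x*P x) + α*(x+P x)))) * hGexp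
      -- final sign computation
      have hyVx : P x * Vq β γ x < 0 := mul_neg_of_neg_of_pos hy hVx
      have hprodpos : 0 < (γ * (x + P x)) * (β*(x*P x) - 1) :=
        mul_pos_of_neg_of_neg hγs (hβp x hx)
      have hΛ2 : 0 < Λ^2 := by positivity
      have hR : ((Λ*γ) * gv) * ((B-δ) * (P x * Vq β γ x))
          = -(Λ^2 * ((γ * (x + P x)) * (β*(x*P x) - 1))) := by
        linear_combination (Λ*γ) * hKid
      have hfac : (B-δ) * (P x * Vq β γ x) < 0 := mul_neg_of_pos_of_neg hm hyVx
      have hRneg : ((Λ*γ) * gv) * ((B-δ) * (P x * Vq β γ x)) < 0 := by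
        rw [hR]
        have : 0 < Λ^2 * ((γ * (x + P x)) * (β*(x*P x) - 1)) := mul_pos hΛ2 hprodpos
        linarith
      by_contra hcon
      push_neg at hcon
      nlinarith [mul_nonneg (neg_nonneg.mpr hcon) (neg_nonneg.mpr hfac.le), hRneg]
    · -- β = 0: G is the nonzero constant
      exfalso
      apply hne
      simp only [hGfdef, hβ0, zero_mul, zero_sub, neg_eq_zero] at hG0
      linarith
  constructor
  · -- part (i)
    intro hyp x₀ hx₀ hI0
    set Λ : ℝ := β*(B-δ)^2 + γ*(B-δ)*α + α^2 with hΛdef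
    rcases le_or_gt (Λ * γ) 0 with hΛγ | hΛγ
    · -- use the negated functions
      have main := aux_main (fun t => -(Itil B α δ P t)) (fun t => -(Gf t)) (fun t => -(df t))
        (show -(Itil B α δ P 0) = 0 by rw [hI00, neg_zero])
        (fun z hz => (hIcont z hz).neg)
        hGc.neg
        (fun x hx => (hd x hx).neg)
        (fun x hx => by
          obtain ⟨ρ, hρ, heq⟩ := hdG x hx
          exact ⟨ρ, hρ, show -(df x) = ρ * -(Gf x) by rw [heq]; ring⟩)
        (fun x hx h0 => by
          have hG0 : Gf x = 0 := neg_eq_zero.mp h0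
          obtain ⟨hder, hsign⟩ := hcross_core hyp x hx hG0
          have hgvneg : β * ((B - δ) * (1 + deriv P x) + α * (P x + x * deriv P x)) < 0 := by
            rcases lt_trichotomy (Λ*γ) 0 with h | h | h
            · nlinarith [hsign]
            · rw [hΛdef] at h; rw [h] at hsign; simp at hsign
            · exact absurd h (not_lt.mpr hΛγ)
          exact ⟨-(β * ((B - δ) * (1 + deriv P x) + α * (P x + x * deriv P x))),
            by linarith, hder.neg⟩)
        x₀ hx₀ (show -(Itil B α δ P x₀) = 0 by rw [hI0, neg_zero])
      obtain ⟨hd0, huniq⟩ := main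
      constructor
      · rw [(hd x₀ hx₀).deriv]
        intro h
        exact hd0 (show -(df x₀) = 0 by rw [h, neg_zero])
      · intro x₁ hx₁ hI1
        exact huniq x₁ hx₁ (show -(Itil B α δ P x₁) = 0 by rw [hI1, neg_zero])
    · have main := aux_main (Itil B α δ P) Gf df hI00 hIcont hGc hd hdG
        (fun x hx h0 => by
          obtain ⟨hder, hsign⟩ := hcross_core hyp x hx h0
          have hgvpos : 0 < β * ((B - δ) * (1 + deriv P x) + α * (P x + x * deriv P x)) := by
            nlinarith [hsign]
          exact ⟨_, hgvpos, hder⟩)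
        x₀ hx₀ hI0
      obtain ⟨hd0, huniq⟩ := main
      refine ⟨?_, huniq⟩
      rw [(hd x₀ hx₀).deriv]
      exact hd0
  · -- part (ii)
    intro hyp x hx
    rcases eq_or_lt_of_le hx.1 with h0 | h0
    · rw [Itil, ← h0, hP0, intervalIntegral.integral_same]
    · have hxIoo : x ∈ Set.Ioo 0 b := ⟨h0, hx.2⟩
      obtain ⟨hy, hVx, hVy, hXx, hXy⟩ := hfacts x hxIoo
      rcases hyp with hA | ⟨hβ0, hsum⟩
      · -- α = γ = 0
        have hα : α = 0 := by
          have := congrArg Prod.fst hA; simpa using this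
        have hγ : γ = 0 := by
          have := congrArg Prod.snd hA; simpa using this
        have hss := s_sign β γ h0 hy (fun u hu => hV x hxIoo u hu) (hint x hxIoo)
        have hs0 : x + P x = 0 := hss.2.2 hγ
        have hPx : P x = -x := by linarith
        rw [Itil, hPx]
        have hXconst : ∀ u : ℝ, u / Xsl B α δ u = u * ((1+δ)/(B-δ)) := by
          intro u
          rw [Xsl, hα, zero_mul, add_zero, div_div_eq_mul_div, mul_div_assoc]
        simp_rw [hXconst]
        rw [intervalIntegral.integral_mul_const, integral_id]
        simp [neg_sq]
      · -- β = 0 and α = -γ(B-δ)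
        have hα : α = -(γ*(B-δ)) := by linarith
        rw [Itil]
        have hcong : (∫ u in (P x)..x, u / Xsl B α δ u)
            = ∫ u in (P x)..x, ((1+δ)/(B-δ)) * (u / Vq β γ u) := by
          apply intervalIntegral.integral_congr
          intro u hu
          rw [Set.uIcc_of_le (by linarith [hxIoo.1] : P x ≤ x)] at hu
          have hVu : 0 < Vq β γ u := hV x hxIoo u hu
          have hXu : 0 < B - δ + α*u := hXnum x (Set.Ioo_subset_Ico_self hxIoo) u hu
          show u / Xsl B α δ u = (1+δ)/(B-δ) * (u / Vq β γ u)
          rw [Xsl, div_div_eq_mul_div, div_mul_div_comm,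
            div_eq_div_iff hXu.ne' (mul_ne_zero (by linarith : (B:ℝ) - δ ≠ 0) hVu.ne')]
          simp only [Vq, hβ0, hα]
          ring
        rw [hcong, intervalIntegral.integral_const_mul, hint x hxIoo, mul_zero]
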